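/- Let a1 ≥ a2 > 1 and let θ_1, …, θ_k be distributed according to the multiplicative inverse gamma prior with parameters (a1, a2). Then there exists m with 0 < m < a2 such that the sequence of m-th moments is strictly increasing: E(θ_{h+1}^m) > E(θ_h^m) for every h ∈ {1, …, k−1}. -/

import Mathlib

open MeasureTheory ProbabilityTheory Real Filter Set
open scoped Topology ENNReal NNReal

/-- Density of the inverse gamma distribution `Inv-Ga(a, b)`: equal to
`b^a / Γ(a) · x^{-(a+1)} · e^{-b/x}` for `x > 0` and `0` otherwise. -/
noncomputable def invGammaPDF (a b : ℝ) (x : ℝ) : ℝ :=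
  if 0 < x then b ^ a / Real.Gamma a * x ^ (-(a + 1)) * Real.exp (-b / x) else 0

/-- The inverse gamma distribution `Inv-Ga(a, b)` as a measure on `ℝ`. -/
noncomputable def invGammaMeasure (a b : ℝ) : Measure ℝ :=
  MeasureTheory.volume.withDensity (fun x => ENNReal.ofReal (invGammaPDF a b x))

lemma measurable_invGammaPDF (a b : ℝ) : Measurable (invGammaPDF a b) := by
  unfold invGammaPDF
  refine Measurable.ite measurableSet_Ioi ?_ measurable_const
  exact ((measurable_const.mul (measurable_id.pow_const _)).mul
    ((measurable_const.div measurable_id).exp))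

lemma invGammaPDF_nonneg (a b x : ℝ) (hb : 0 < b) (ha : 0 < a) : 0 ≤ invGammaPDF a b x := by
  unfold invGammaPDF
  split
  · positivity
  · exact le_refl 0

lemma invGamma_ae_pos (a b : ℝ) : ∀ᵐ x ∂(invGammaMeasure a b), 0 < x := by
  rw [ae_iff]
  have h : {x : ℝ | ¬ 0 < x} = Iic 0 := by ext x; simp
  rw [h, invGammaMeasure, withDensity_apply _ measurableSet_Iic]
  have : ∀ᵐ x ∂(volume.restrict (Iic (0:ℝ))), ENNReal.ofReal (invGammaPDF a b x) = 0 := by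
    filter_upwards [ae_restrict_mem measurableSet_Iic] with x hx
    simp [invGammaPDF, not_lt.mpr (mem_Iic.mp hx)]
  rw [lintegral_congr_ae this]
  simp

/-- The `m`-th moment of `Inv-Ga(a,1)` for `0 < m < a`. -/
lemma invGamma_moment {a m : ℝ} (ha : 0 < a) (hma : m < a) :
    ∫ x, x ^ m ∂(invGammaMeasure a 1) = Real.Gamma (a - m) / Real.Gamma a := by
  have hGa : 0 < Real.Gamma a := Real.Gamma_pos_of_pos ha
  -- rewrite withDensity integral
  have hmeas : Measurable fun x => (invGammaPDF a 1 x).toNNReal :=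
    (measurable_invGammaPDF a 1).real_toNNReal
  have h1 : ∫ x, x ^ m ∂(invGammaMeasure a 1)
      = ∫ x, invGammaPDF a 1 x * x ^ m := by
    rw [invGammaMeasure]
    have : (fun x => ENNReal.ofReal (invGammaPDF a 1 x))
        = fun x => ((invGammaPDF a 1 x).toNNReal : ℝ≥0∞) := rfl
    rw [this, integral_withDensity_eq_integral_smul hmeas]
    refine integral_congr_ae (Filter.Eventually.of_forall fun x => ?_)
    show (invGammaPDF a 1 x).toNNReal • x ^ m = invGammaPDF a 1 x * x ^ m
    rw [NNReal.smul_def, smul_eq_mul, Real.coe_toNNReal _ (invGammaPDF_nonneg a 1 x one_pos ha)]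
  -- restrict to Ioi 0
  have h2 : ∫ x, invGammaPDF a 1 x * x ^ m
      = ∫ x in Ioi (0:ℝ), x ^ (m - a - 1) * Real.exp (-1 / x) / Real.Gamma a := by
    rw [← integral_indicator measurableSet_Ioi]
    refine integral_congr_ae (Filter.Eventually.of_forall fun x => ?_)
    by_cases hx : 0 < x
    · simp only [indicator_of_mem (mem_Ioi.mpr hx), invGammaPDF, if_pos hx, Real.one_rpow]
      rw [show m - a - 1 = -(a+1) + m by ring, Real.rpow_add hx]
      ring_nf
    · simp [indicator_of_notMem (by simpa using hx : x ∉ Ioi (0:ℝ)), invGammaPDF, if_neg hx]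
  -- substitution y = 1/x
  have key : ∫ x in Ioi (0:ℝ), x ^ (m - a - 1) * Real.exp (-1 / x) = Real.Gamma (a - m) := by
    have hsub := integral_comp_rpow_Ioi (fun y => Real.exp (-y) * y ^ (a - m - 1))
      (p := -1) (by norm_num)
    rw [Real.Gamma_eq_integral (by linarith : 0 < a - m), ← hsub]
    refine setIntegral_congr_fun measurableSet_Ioi fun x hx => ?_
    have hx0 : 0 < x := hx
    show x ^ (m - a - 1) * Real.exp (-1 / x)
      = (|(-1:ℝ)| * x ^ ((-1:ℝ) - 1)) • (Real.exp (-(x ^ (-1:ℝ))) * (x ^ (-1:ℝ)) ^ (a - m - 1))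
    rw [smul_eq_mul, Real.rpow_neg_one, Real.inv_rpow hx0.le, ← Real.rpow_neg hx0.le,
      show |(-1:ℝ)| = 1 by norm_num, one_mul,
      show Real.exp (-x⁻¹) = Real.exp (-1 / x) by rw [neg_div, one_div],
      mul_comm (Real.exp (-1/x)) (x ^ (-(a - m - 1))), ← mul_assoc, ← Real.rpow_add hx0]
    congr 1
    ring
  rw [h1, h2]
  rw [integral_div, key]

/-- for `a1 ≥ a2 > 1` there exists `0 < m < a2` such that the `m`-th moments
of the multiplicative inverse gamma prior strictly increase along `h`. -/
theorem multiplicative_inverse_gamma_exists_increasing_moments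
    {Ω : Type*} [MeasureSpace Ω] [IsProbabilityMeasure (ℙ : Measure Ω)]
    (a1 a2 : ℝ) (ha12 : a2 ≤ a1) (ha2 : 1 < a2)
    (k : ℕ) (ϑ : ℕ → Ω → ℝ)
    (hmeas : ∀ l, Measurable (ϑ l))
    (hindep : iIndepFun ϑ ℙ)
    (hlaw1 : Measure.map (ϑ 0) ℙ = invGammaMeasure a1 1)
    (hlaw2 : ∀ l, 1 ≤ l → Measure.map (ϑ l) ℙ = invGammaMeasure a2 1) :
    ∃ m : ℝ, 0 < m ∧ m < a2 ∧
      ∀ h, 1 ≤ h → h ≤ k - 1 →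
        (∫ ω, (∏ l ∈ Finset.range h, ϑ l ω) ^ m ∂ℙ) <
          ∫ ω, (∏ l ∈ Finset.range (h + 1), ϑ l ω) ^ m ∂ℙ := by
  have ha2' : 0 < a2 := by linarith
  have ha1' : 0 < a1 := by linarith
  -- Γ blows up near 0
  have hGtop : Tendsto Real.Gamma (𝓝[>] (0:ℝ)) atTop := by
    have hcont : ContinuousAt Real.Gamma 1 := by
      refine (Real.differentiableAt_Gamma fun n => ?_).continuousAt
      have h2 : (0:ℝ) ≤ (n:ℝ) := n.cast_nonneg
      intro h
      linarith
    have h1 : Tendsto (fun x : ℝ => Real.Gamma (x + 1)) (𝓝[>] 0) (𝓝 1) := by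
      have : Tendsto (fun x : ℝ => x + 1) (𝓝[>] 0) (𝓝 1) := by
        have h0 : Tendsto (fun x : ℝ => x + 1) (𝓝 (0:ℝ)) (𝓝 ((0:ℝ) + 1)) :=
          tendsto_id.add tendsto_const_nhds
        simpa using h0.mono_left nhdsWithin_le_nhds
      simpa [Real.Gamma_one, Function.comp_def] using hcont.tendsto.comp this
    have h2 : Tendsto (fun x : ℝ => Real.Gamma (x + 1) * x⁻¹) (𝓝[>] 0) atTop :=
      h1.pos_mul_atTop one_pos tendsto_inv_nhdsGT_zero
    refine h2.congr' ?_
    filter_upwards [self_mem_nhdsWithin] with x (hx : 0 < x)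
    rw [Real.Gamma_add_one hx.ne']
    field_simp
  -- choose ε
  have hev : ∀ᶠ x in 𝓝[>] (0:ℝ), Real.Gamma a2 < Real.Gamma x ∧ x < a2 := by
    refine (hGtop.eventually (eventually_gt_atTop _)).and ?_
    exact eventually_nhdsWithin_of_eventually_nhds
      (Filter.Tendsto.eventually_lt_const (by linarith) tendsto_id)
  obtain ⟨ε, ⟨hGε, hεa2⟩, hε0⟩ := (hev.and self_mem_nhdsWithin).exists
  set m := a2 - ε with hm
  have hm0 : 0 < m := by simp only [hm]; linarith
  have hma2 : m < a2 := by simp only [hm]; linarith [hε0]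
  have hma1 : m < a1 := lt_of_lt_of_le hma2 ha12
  refine ⟨m, hm0, hma2, ?_⟩
  -- moments
  set c := Real.Gamma (a2 - m) / Real.Gamma a2 with hc
  have hc1 : 1 < c := by
    rw [hc]
    rw [lt_div_iff₀ (Real.Gamma_pos_of_pos ha2'), one_mul]
    have : a2 - m = ε := by simp [hm]
    rw [this]; exact hGε
  have hrpow_meas : Measurable fun x : ℝ => x ^ m := measurable_id.pow_const m
  have hmom : ∀ l, 1 ≤ l → ∫ ω, (ϑ l ω) ^ m ∂ℙ = c := by
    intro l hl
    have := integral_map (μ := ℙ) (hmeas l).aemeasurable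
      (f := fun x : ℝ => x ^ m) hrpow_meas.aestronglyMeasurable
    rw [← this, hlaw2 l hl, invGamma_moment ha2' hma2]
  have hmom0 : ∫ ω, (ϑ 0 ω) ^ m ∂ℙ = Real.Gamma (a1 - m) / Real.Gamma a1 := by
    have := integral_map (μ := ℙ) (hmeas 0).aemeasurable
      (f := fun x : ℝ => x ^ m) hrpow_meas.aestronglyMeasurable
    rw [← this, hlaw1, invGamma_moment ha1' hma1]
  -- a.e. positivity of each ϑ l
  have hpos : ∀ l, ∀ᵐ ω ∂(ℙ : Measure Ω), 0 < ϑ l ω := by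
    intro l
    have h0 : ∀ᵐ x ∂(Measure.map (ϑ l) ℙ), 0 < x := by
      rcases Nat.eq_zero_or_pos l with rfl | hl
      · rw [hlaw1]; exact invGamma_ae_pos a1 1
      · rw [hlaw2 l hl]; exact invGamma_ae_pos a2 1
    exact (ae_map_iff (hmeas l).aemeasurable measurableSet_Ioi).mp h0
  have hposall : ∀ᵐ ω ∂(ℙ : Measure Ω), ∀ l, 0 < ϑ l ω := ae_all_iff.mpr hpos
  -- the product step
  have hstep : ∀ h : ℕ,
      ∫ ω, (∏ l ∈ Finset.range (h+1), ϑ l ω) ^ m ∂ℙ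
        = (∫ ω, (∏ l ∈ Finset.range h, ϑ l ω) ^ m ∂ℙ) * ∫ ω, (ϑ h ω) ^ m ∂ℙ := by
    intro h
    have hP : Measurable (∏ l ∈ Finset.range h, ϑ l) := by
      have h0 := Finset.measurable_prod (Finset.range h) (fun i _ => hmeas i)
      convert h0 using 1
      ext ω
      simp [Finset.prod_apply]
    have hindepPX : IndepFun (∏ l ∈ Finset.range h, ϑ l) (ϑ h) ℙ :=
      hindep.indepFun_prod_range_succ hmeas h
    have hindep2 : IndepFun ((fun x : ℝ => x ^ m) ∘ (∏ l ∈ Finset.range h, ϑ l))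
        ((fun x : ℝ => x ^ m) ∘ (ϑ h)) ℙ := hindepPX.comp hrpow_meas hrpow_meas
    have heq := hindep2.integral_fun_mul_eq_mul_integral
      ((hrpow_meas.comp hP).aestronglyMeasurable)
      ((hrpow_meas.comp (hmeas h)).aestronglyMeasurable)
    have hcong : ∫ ω, (∏ l ∈ Finset.range (h+1), ϑ l ω) ^ m ∂ℙ
        = ∫ ω, ((fun x : ℝ => x ^ m) ∘ (∏ l ∈ Finset.range h, ϑ l)) ω
            * ((fun x : ℝ => x ^ m) ∘ (ϑ h)) ω ∂ℙ := by
      refine integral_congr_ae ?_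
      filter_upwards [hposall] with ω hω
      simp only [Function.comp_apply, Finset.prod_apply]
      rw [Finset.prod_range_succ]
      rw [Real.mul_rpow (Finset.prod_nonneg fun i _ => (hω i).le) (hω h).le]
    have e1 : ∫ ω, ((fun x : ℝ => x ^ m) ∘ (∏ l ∈ Finset.range h, ϑ l)) ω ∂ℙ
        = ∫ ω, (∏ l ∈ Finset.range h, ϑ l ω) ^ m ∂ℙ := by
      refine integral_congr_ae (Filter.Eventually.of_forall fun ω => ?_)
      simp [Finset.prod_apply]
    have e2 : ∫ ω, ((fun x : ℝ => x ^ m) ∘ (ϑ h)) ω ∂ℙ = ∫ ω, (ϑ h ω) ^ m ∂ℙ := rfl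
    rw [hcong, heq, e1, e2]
  -- positivity of moments by induction
  have hposmom : ∀ h : ℕ, 1 ≤ h → 0 < ∫ ω, (∏ l ∈ Finset.range h, ϑ l ω) ^ m ∂ℙ := by
    intro h hh
    induction h with
    | zero => omega
    | succ n ih =>
      rcases Nat.eq_zero_or_pos n with rfl | hn
      · have : ∫ ω, (∏ l ∈ Finset.range (0 + 1), ϑ l ω) ^ m ∂ℙ = ∫ ω, (ϑ 0 ω) ^ m ∂ℙ := by
          refine integral_congr_ae (Filter.Eventually.of_forall fun ω => ?_)
          norm_num
        rw [this, hmom0]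
        exact div_pos (Real.Gamma_pos_of_pos (by linarith)) (Real.Gamma_pos_of_pos ha1')
      · rw [hstep n, hmom n hn]
        exact mul_pos (ih hn) (by linarith)
  intro h hh _
  rw [hstep h, hmom h hh]
  nlinarith [hposmom h hh]
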